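/- Let (X, 𝓔) be a uniformly locally finite coarse space. Every operator a in C*_u(X,𝓔) belongs to C*_u(X,𝓕) for some countably generated coarse reduct 𝓕 ⊆ 𝓔; consequently C*_u(X,𝓔) is the union of C*_u(X,𝓕) over all countably generated reducts 𝓕 of 𝓔. -/
import Mathlib


open ContinuousLinearMap

/-- A coarse structure on `X`: a collection of subsets of `X × X` containing the diagonal
and closed under subsets, finite unions, inverses, and composition. -/
structure CoarseStructure (X : Type*) where
  sets : Set (Set (X × X))
  diagonal_mem : {p : X × X | p.1 = p.2} ∈ sets
  subset_mem : ∀ E ∈ sets, ∀ F ⊆ E, F ∈ sets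
  union_mem : ∀ E ∈ sets, ∀ F ∈ sets, E ∪ F ∈ sets
  inv_mem : ∀ E ∈ sets, {p : X × X | (p.2, p.1) ∈ E} ∈ sets
  comp_mem : ∀ E ∈ sets, ∀ F ∈ sets,
    {p : X × X | ∃ y, (p.1, y) ∈ E ∧ (y, p.2) ∈ F} ∈ sets

/-- A coarse structure is uniformly locally finite if each entourage has uniformly
finite sections. -/
def CoarseStructure.ULF {X : Type*} (𝓔 : CoarseStructure X) : Prop :=
  ∀ E ∈ 𝓔.sets, ∃ k : ℕ, ∀ x : X,
    Set.Finite {y | (x, y) ∈ E} ∧ Nat.card {y | (x, y) ∈ E} ≤ k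

noncomputable section

/-- The standard basis vector `δ_x` of `ℓ²(X)`. -/
def deltaVec (X : Type*) [DecidableEq X] (x : X) : lp (fun _ : X => ℂ) 2 :=
  lp.single 2 x 1

/-- The rank-one orthogonal projection `e_{xx}` onto `ℂ δ_x` in `ℓ²(X)`. -/
def ee (X : Type*) [DecidableEq X] (x : X) :
    lp (fun _ : X => ℂ) 2 →L[ℂ] lp (fun _ : X => ℂ) 2 :=
  (innerSL ℂ (deltaVec X x)).smulRight (deltaVec X x)

/-- The support of an operator `a` on `ℓ²(X)`:
`{(x, y) : ⟨a δ_x, δ_y⟩ ≠ 0}`. -/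
def opSupport {X : Type*} [DecidableEq X]
    (a : lp (fun _ : X => ℂ) 2 →L[ℂ] lp (fun _ : X => ℂ) 2) : Set (X × X) :=
  {p | inner (𝕜 := ℂ) (a (deltaVec X p.1)) (deltaVec X p.2) ≠ 0}

/-- The uniform Roe algebra of `(X, 𝓔)`: the operator-norm closure of the set of
operators with `𝓔`-bounded propagation. -/
def RoeAlgebra {X : Type*} [DecidableEq X] (𝓔 : CoarseStructure X) :
    Set (lp (fun _ : X => ℂ) 2 →L[ℂ] lp (fun _ : X => ℂ) 2) :=
  closure {a | opSupport a ∈ 𝓔.sets}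

end

/-- The coarse structure generated by a family of sets: the intersection of all coarse
structures containing the family. -/
def CoarseStructure.gen {X : Type*} (S : Set (Set (X × X))) : CoarseStructure X where
  sets := {E | ∀ 𝓖 : CoarseStructure X, S ⊆ 𝓖.sets → E ∈ 𝓖.sets}
  diagonal_mem := fun 𝓖 _ => 𝓖.diagonal_mem
  subset_mem := fun E hE F hF 𝓖 hS => 𝓖.subset_mem E (hE 𝓖 hS) F hF
  union_mem := fun E hE F hF 𝓖 hS => 𝓖.union_mem E (hE 𝓖 hS) F (hF 𝓖 hS)
  inv_mem := fun E hE 𝓖 hS => 𝓖.inv_mem E (hE 𝓖 hS)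
  comp_mem := fun E hE F hF 𝓖 hS => 𝓖.comp_mem E (hE 𝓖 hS) F (hF 𝓖 hS)

set_option synthInstance.maxHeartbeats 1000000 in
/-- For a u.l.f. coarse space `(X, 𝓔)`, an operator belongs to `C*_u(X, 𝓔)` if and only if
it belongs to `C*_u(X, 𝓕)` for some countably generated coarse reduct `𝓕 ⊆ 𝓔`; thus
`C*_u(X, 𝓔)` is the union of the `C*_u(X, 𝓕)` over countably generated reducts `𝓕`. -/
theorem roe_mem_iff_mem_countably_generated_reduct {X : Type*} [DecidableEq X]
    (𝓔 : CoarseStructure X) (hulf : 𝓔.ULF)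
    (a : lp (fun _ : X => ℂ) 2 →L[ℂ] lp (fun _ : X => ℂ) 2) :
    a ∈ RoeAlgebra 𝓔 ↔ ∃ 𝓕 : CoarseStructure X, 𝓕.sets ⊆ 𝓔.sets ∧
      (∃ F : ℕ → Set (X × X), (∀ n, F n ∈ 𝓕.sets) ∧
        ∀ 𝓖 : CoarseStructure X, (∀ n, F n ∈ 𝓖.sets) → 𝓕.sets ⊆ 𝓖.sets) ∧
      a ∈ RoeAlgebra 𝓕 := by
  constructor
  · intro ha
    obtain ⟨b, hb, hlim⟩ := mem_closure_iff_seq_limit.mp ha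
    refine ⟨CoarseStructure.gen (Set.range fun n => opSupport (b n)), ?_, ⟨fun n => opSupport (b n), ?_, ?_⟩, ?_⟩
    · intro E hE
      exact hE 𝓔 (by rintro _ ⟨n, rfl⟩; exact hb n)
    · intro n 𝓖 hS
      exact hS ⟨n, rfl⟩
    · intro 𝓖 h𝓖 E hE
      exact hE 𝓖 (by rintro _ ⟨n, rfl⟩; exact h𝓖 n)
    · exact mem_closure_iff_seq_limit.mpr ⟨b, fun n 𝓖 hS => hS ⟨n, rfl⟩, hlim⟩
  · rintro ⟨𝓕, hsub, -, ha⟩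
    exact closure_mono (s := {b | opSupport b ∈ 𝓕.sets}) (t := {b | opSupport b ∈ 𝓔.sets}) (fun b hb => hsub hb) ha
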